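/- The Douglas–Rachford operator T satisfies 2 T T* = T + T*. -/

import Mathlib

noncomputable section

variable {X : Type*} [NormedAddCommGroup X] [InnerProductSpace ℝ X] [CompleteSpace X]

/-- The orthogonal projection onto a closed subspace `W`, as an operator on `X`. -/
noncomputable def proj (W : Submodule ℝ X) [Submodule.HasOrthogonalProjection W] : X →L[ℝ] X :=
  W.subtypeL.comp (W.orthogonalProjectionOnto)

instance infHOP (U V : Submodule ℝ X) [CompleteSpace U] [CompleteSpace V] :
    Submodule.HasOrthogonalProjection (U ⊓ V) := by
  have hU : IsClosed (U : Set X) := (completeSpace_coe_iff_isComplete.mp ‹_›).isClosed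
  have hV : IsClosed (V : Set X) := (completeSpace_coe_iff_isComplete.mp ‹_›).isClosed
  have : CompleteSpace (U ⊓ V : Submodule ℝ X) := (hU.inter hV).completeSpace_coe
  infer_instance

/-- The fixed point set `Fix T = {x | T x = x}` of a continuous linear operator `T`,
as a submodule of `X`. -/
noncomputable def fixedSpace (T : X →L[ℝ] X) : Submodule ℝ X := LinearMap.ker ((T - 1 : X →L[ℝ] X) : X →ₗ[ℝ] X)

instance fixedSpaceHOP (T : X →L[ℝ] X) : Submodule.HasOrthogonalProjection (fixedSpace T) := by
  have h : IsClosed ((fixedSpace T : Submodule ℝ X) : Set X) := by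
    have : ((fixedSpace T : Submodule ℝ X) : Set X) = {x | T x = x} := by
      ext x; simp [fixedSpace, LinearMap.mem_ker, sub_eq_zero]
    rw [this]
    exact isClosed_eq T.continuous continuous_id
  have : CompleteSpace (fixedSpace T) := h.completeSpace_coe
  infer_instance

/-- The reflector `R_W = 2 P_W − Id` associated with `W`. -/
noncomputable def reflector (W : Submodule ℝ X) [Submodule.HasOrthogonalProjection W] : X →L[ℝ] X :=
  2 • proj W - 1

/-- The Douglas–Rachford operator `T = T_{V,U} = P_V (2 P_U − Id) + Id − P_U`.
(The first argument is `U`, the second is `V`.) -/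
noncomputable def drOperator (U V : Submodule ℝ X) [Submodule.HasOrthogonalProjection U]
    [Submodule.HasOrthogonalProjection V] : X →L[ℝ] X :=
  proj V * (2 • proj U - 1) + 1 - proj U

/-- The cosine of the Friedrichs angle between `U` and `V`. -/
noncomputable def friedrichs (U V : Submodule ℝ X) : ℝ :=
  sSup {c : ℝ | ∃ u v : X, u ∈ U ⊓ (U ⊓ V)ᗮ ∧ v ∈ V ⊓ (U ⊓ V)ᗮ ∧
    ‖u‖ ≤ 1 ∧ ‖v‖ ≤ 1 ∧ c = inner ℝ u v}

set_option linter.unusedSectionVars false in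
lemma proj_idem (W : Submodule ℝ X) [CompleteSpace W] : proj W * proj W = proj W := by
  ext x
  simp [proj, ContinuousLinearMap.mul_apply, Submodule.orthogonalProjectionOnto_mem_subspace_eq_self, Submodule.starProjection_eq_self_iff]

lemma proj_sa (W : Submodule ℝ X) [CompleteSpace W] : star (proj W) = proj W :=
  isSelfAdjoint_starProjection W

/-- `2 T T* = T + T*`. -/
theorem drOperator_two_mul_self_adjoint
    (U V : Submodule ℝ X) [CompleteSpace U] [CompleteSpace V] :
    2 • (drOperator U V * ContinuousLinearMap.adjoint (drOperator U V)) =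
      drOperator U V + ContinuousLinearMap.adjoint (drOperator U V) := by
  set P := proj U with hPdef
  set Q := proj V with hQdef
  have hP : P * P = P := proj_idem U
  have hQ : Q * Q = Q := proj_idem V
  have hadj : ContinuousLinearMap.adjoint (drOperator U V) = (P + P - 1) * Q + 1 - P := by
    rw [← ContinuousLinearMap.star_eq_adjoint]
    simp [drOperator, star_sub, star_add, star_mul, proj_sa, mul_two, hPdef, hQdef]
  rw [hadj]
  have hP' : ∀ x : X →L[ℝ] X, P * (P * x) = P * x := fun x => by
    rw [← mul_assoc, hP]
  have hQ' : ∀ x : X →L[ℝ] X, Q * (Q * x) = Q * x := fun x => by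
    rw [← mul_assoc, hQ]
  simp only [drOperator, ← hPdef, ← hQdef, two_smul, two_nsmul]
  simp only [mul_add, add_mul, mul_sub, sub_mul, mul_one, one_mul, mul_assoc, hP, hQ, hP', hQ']
  abel
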